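/- Let H₀ be a closed real-linear subspace of a complex Hilbert space H, and define H₀_C = H₀ ∩ iH₀ (the largest complex subspace contained in H₀) and H₀^C = closure(H₀ + iH₀) (the smallest closed complex subspace containing H₀). Then (H₀')^C equals the complex orthogonal complement of H₀_C, and (H₀')_C equals the complex orthogonal complement of H₀^C. -/

import Mathlib

/-- The symplectic complement of a real-linear subspace of a complex Hilbert space. -/
def sympS {H : Type*} [NormedAddCommGroup H] [InnerProductSpace ℂ H] (S : Set H) : Set H :=
  {ξ | ∀ h ∈ S, (inner ℂ ξ h : ℂ).im = 0}

/-- The largest complex subspace `S ∩ iS` contained in a real subspace `S`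
(for sets with `S = -S` this is exactly `S ∩ iS`). -/
def smallC {H : Type*} [NormedAddCommGroup H] [InnerProductSpace ℂ H] (S : Set H) : Set H :=
  {x | x ∈ S ∧ Complex.I • x ∈ S}

/-- The smallest closed complex subspace containing `S`: the closure of `S + iS`. -/
def bigC {H : Type*} [NormedAddCommGroup H] [InnerProductSpace ℂ H] (S : Set H) : Set H :=
  closure {z | ∃ x ∈ S, ∃ y ∈ S, z = x + Complex.I • y}

/-- The complex orthogonal complement of a set. -/
def corthS {H : Type*} [NormedAddCommGroup H] [InnerProductSpace ℂ H] (S : Set H) : Set H :=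
  {ξ | ∀ k ∈ S, (inner ℂ ξ k : ℂ) = 0}

section Aux

variable {H : Type*} [NormedAddCommGroup H] [InnerProductSpace ℂ H]

/-- Multiplication by `I` as a real-linear map. -/
noncomputable def Jmap (H : Type*) [NormedAddCommGroup H] [InnerProductSpace ℂ H] :
    H →ₗ[ℝ] H where
  toFun x := Complex.I • x
  map_add' a b := smul_add _ _ _
  map_smul' r x := smul_comm Complex.I r x

@[simp] lemma Jmap_apply (x : H) : Jmap H x = Complex.I • x := rfl

lemma mem_map_Jmap (K : Submodule ℝ H) (x : H) :
    x ∈ K.map (Jmap H) ↔ Complex.I • x ∈ K := by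
  constructor
  · rintro ⟨y, hy, rfl⟩
    have : Complex.I • Jmap H y = -y := by
      simp [smul_smul, Complex.I_mul_I]
    rw [this]
    exact K.neg_mem hy
  · intro hx
    refine ⟨-(Complex.I • x), K.neg_mem hx, ?_⟩
    simp [smul_smul, Complex.I_mul_I]

lemma map_Jmap_map_Jmap (K : Submodule ℝ H) : (K.map (Jmap H)).map (Jmap H) = K := by
  ext x
  rw [mem_map_Jmap, mem_map_Jmap]
  have : Complex.I • Complex.I • x = -x := by simp [smul_smul, Complex.I_mul_I]
  rw [this]
  exact ⟨fun h => by simpa using K.neg_mem h, fun h => K.neg_mem h⟩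

end Aux

/-- For a closed real-linear subspace `H₀` of a complex Hilbert space:
`(H₀')^ℂ` is the complex orthogonal complement of `(H₀)_ℂ`, and
`(H₀')_ℂ` is the complex orthogonal complement of `(H₀)^ℂ`. -/
theorem stmt_10 {H : Type*} [NormedAddCommGroup H] [InnerProductSpace ℂ H] [CompleteSpace H]
    (H₀ : Submodule ℝ H) (hH₀ : IsClosed (H₀ : Set H)) :
    bigC (sympS (H₀ : Set H)) = corthS (smallC (H₀ : Set H)) ∧
      smallC (sympS (H₀ : Set H)) = corthS (bigC (H₀ : Set H)) := by
  letI : InnerProductSpace ℝ H := InnerProductSpace.complexToReal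
  -- basic facts about real and complex inner products
  have hre : ∀ ξ a : H, (inner ℝ ξ a : ℝ) = (inner ℂ ξ a : ℂ).re :=
    fun ξ a => real_inner_eq_re_inner ℂ ξ a
  have hIr : ∀ ξ a : H, (inner ℂ ξ (Complex.I • a) : ℂ).re = -(inner ℂ ξ a : ℂ).im := by
    intro ξ a
    rw [inner_smul_right]
    simp
  have hIl : ∀ ξ a : H, (inner ℂ (Complex.I • ξ) a : ℂ) = -Complex.I * (inner ℂ ξ a : ℂ) := by
    intro ξ a
    rw [inner_smul_left]
    simp
  set J := Jmap H with hJ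
  -- sympS ↑H₀ = ↑((H₀.map J)ᗮ)
  have hsymp : sympS (H₀ : Set H) = ((H₀.map J)ᗮ : Set H) := by
    ext ξ
    simp only [sympS, Set.mem_setOf_eq, SetLike.mem_coe, Submodule.mem_orthogonal]
    constructor
    · rintro h u ⟨a, ha, rfl⟩
      have : (inner ℝ (J a) ξ : ℝ) = (inner ℝ ξ (J a) : ℝ) := real_inner_comm _ _
      rw [this, hre, Jmap_apply, hIr, h a ha, neg_zero]
    · intro h a ha
      have h1 := h (J a) ⟨a, ha, rfl⟩
      have : (inner ℝ (J a) ξ : ℝ) = (inner ℝ ξ (J a) : ℝ) := real_inner_comm _ _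
      rw [this, hre, Jmap_apply, hIr] at h1
      linarith
  -- corthS of an I-invariant submodule is the real orthogonal complement
  have hcorth : ∀ K : Submodule ℝ H, (∀ x ∈ K, Complex.I • x ∈ K) →
      corthS (K : Set H) = (Kᗮ : Set H) := by
    intro K hK
    ext ξ
    simp only [corthS, Set.mem_setOf_eq, SetLike.mem_coe, Submodule.mem_orthogonal]
    constructor
    · intro h u hu
      have : (inner ℝ u ξ : ℝ) = (inner ℝ ξ u : ℝ) := real_inner_comm _ _
      rw [this, hre, h u hu, Complex.zero_re]
    · intro h k hk
      have h1 : (inner ℂ ξ k : ℂ).re = 0 := by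
        have := h k hk
        rw [real_inner_comm, hre] at this
        exact this
      have h2 : (inner ℂ ξ k : ℂ).im = 0 := by
        have := h (Complex.I • k) (hK k hk)
        rw [real_inner_comm, hre, hIr] at this
        linarith
      exact Complex.ext h1 h2
  -- smallC ↑H₀ = ↑(H₀ ⊓ H₀.map J)
  set N : Submodule ℝ H := H₀ ⊓ H₀.map J with hN
  have hsmall : smallC (H₀ : Set H) = (N : Set H) := by
    ext x
    constructor
    · rintro ⟨hx1, hx2⟩
      exact Submodule.mem_inf.2 ⟨hx1, (mem_map_Jmap _ _).2 hx2⟩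
    · intro hx
      obtain ⟨hx1, hx2⟩ := Submodule.mem_inf.1 hx
      exact ⟨hx1, (mem_map_Jmap _ _).1 hx2⟩
  -- (Kᗮ).map J = (K.map J)ᗮ
  have hmaporth : ∀ K : Submodule ℝ H, (Kᗮ).map J = (K.map J)ᗮ := by
    intro K
    ext x
    rw [mem_map_Jmap, Submodule.mem_orthogonal, Submodule.mem_orthogonal]
    constructor
    · rintro h u ⟨a, ha, rfl⟩
      have h1 := h a ha
      rw [hre] at h1 ⊢
      rw [hIr] at h1
      rw [Jmap_apply, hIl]
      simp only [neg_mul, Complex.neg_re, Complex.mul_re, Complex.I_re, Complex.I_im]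
      simp only [Complex.neg_im, neg_eq_zero] at h1
      simp [h1]
    · intro h a ha
      have h1 := h (J a) ⟨a, ha, rfl⟩
      rw [hre] at h1 ⊢
      rw [Jmap_apply, hIl] at h1
      rw [hIr]
      simp only [neg_mul, Complex.neg_re, Complex.mul_re, Complex.I_re, Complex.I_im,
        neg_eq_zero] at h1 ⊢
      simpa using h1
  -- closedness of H₀.map J
  have hB : IsClosed ((H₀.map J : Submodule ℝ H) : Set H) := by
    have : ((H₀.map J : Submodule ℝ H) : Set H) =
        (Homeomorph.smulOfNeZero (Complex.I) Complex.I_ne_zero (α := H)) '' (H₀ : Set H) := by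
      rw [Submodule.map_coe]
      rfl
    rw [this]
    exact (Homeomorph.isClosedMap _ _ hH₀)
  have hdorth : ∀ K : Submodule ℝ H, IsClosed (K : Set H) → Kᗮᗮ = K := by
    intro K hK
    rw [Submodule.orthogonal_orthogonal_eq_closure]
    exact IsClosed.submodule_topologicalClosure_eq hK
  constructor
  · -- bigC (sympS ↑H₀) = corthS (smallC ↑H₀)
    -- LHS is the closure of ↑((H₀.map J)ᗮ ⊔ ((H₀.map J)ᗮ).map J)
    have hset : {z | ∃ x ∈ sympS (H₀ : Set H), ∃ y ∈ sympS (H₀ : Set H),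
        z = x + Complex.I • y} = (((H₀.map J)ᗮ ⊔ ((H₀.map J)ᗮ).map J : Submodule ℝ H) : Set H) := by
      ext z
      simp only [Set.mem_setOf_eq, hsymp, SetLike.mem_coe, Submodule.mem_sup]
      constructor
      · rintro ⟨x, hx, y, hy, rfl⟩
        exact ⟨x, hx, Complex.I • y, ⟨y, hy, rfl⟩, rfl⟩
      · rintro ⟨x, hx, b, hb, rfl⟩
        rcases hb with ⟨y, hy, rfl⟩
        exact ⟨x, hx, y, hy, rfl⟩
    have hsub : ((H₀.map J)ᗮ ⊔ ((H₀.map J)ᗮ).map J).topologicalClosure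
        = Nᗮ := by
      rw [hN]
      rw [hmaporth, map_Jmap_map_Jmap]
      rw [← Submodule.orthogonal_orthogonal_eq_closure]
      rw [← Submodule.inf_orthogonal]
      rw [hdorth _ hB, hdorth _ hH₀, inf_comm]
    calc bigC (sympS (H₀ : Set H))
        = closure (((H₀.map J)ᗮ ⊔ ((H₀.map J)ᗮ).map J : Submodule ℝ H) : Set H) := by
          rw [bigC, hset]
      _ = (((H₀.map J)ᗮ ⊔ ((H₀.map J)ᗮ).map J).topologicalClosure : Set H) := by
          rw [Submodule.topologicalClosure_coe]
      _ = ((Nᗮ : Submodule ℝ H) : Set H) := by rw [hsub]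
      _ = corthS (smallC (H₀ : Set H)) := by
          rw [hsmall, hcorth]
          intro x hx
          rw [hN, Submodule.mem_inf] at hx ⊢
          rw [mem_map_Jmap] at hx ⊢
          have : Complex.I • Complex.I • x = -x := by simp [smul_smul, Complex.I_mul_I]
          rw [this]
          exact ⟨hx.2, H₀.neg_mem hx.1⟩
  · -- smallC (sympS ↑H₀) = corthS (bigC ↑H₀)
    ext ξ
    simp only [smallC, sympS, corthS, bigC, Set.mem_setOf_eq]
    constructor
    · rintro ⟨h1, h2⟩ k hk
      -- first: inner ξ h = 0 for all h ∈ H₀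
      have key : ∀ h ∈ H₀, (inner ℂ ξ h : ℂ) = 0 := by
        intro h hh
        refine Complex.ext ?_ (h1 h hh)
        have := h2 h hh
        rw [hIl] at this
        simp only [neg_mul, Complex.neg_im, Complex.mul_im, Complex.I_re, Complex.I_im] at this
        rw [Complex.zero_re]
        linarith
      -- extend by linearity and continuity to the closure
      have hcl : IsClosed {k : H | (inner ℂ ξ k : ℂ) = 0} :=
        isClosed_eq (continuous_const.inner continuous_id) continuous_const
      have hsubset : {z | ∃ x ∈ (H₀ : Set H), ∃ y ∈ (H₀ : Set H), z = x + Complex.I • y}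
          ⊆ {k : H | (inner ℂ ξ k : ℂ) = 0} := by
        rintro z ⟨x, hx, y, hy, rfl⟩
        simp only [Set.mem_setOf_eq, inner_add_right, inner_smul_right, key x hx, key y hy,
          mul_zero, add_zero]
      exact closure_minimal hsubset hcl hk
    · intro h
      have key : ∀ a ∈ H₀, (inner ℂ ξ a : ℂ) = 0 := by
        intro a ha
        refine h a (subset_closure ?_)
        exact ⟨a, ha, 0, H₀.zero_mem, by simp⟩
      constructor
      · intro a ha
        rw [key a ha, Complex.zero_im]
      · intro a ha
        rw [hIl, key a ha, mul_zero, Complex.zero_im]
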